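/- Let V be the value function of the Bolza problem with continuous L. Then V is a viscosity subsolution of V_t + H(x,−V_x) = 0 on (0,∞)×ℝⁿ: for every (t,x) with t > 0 and every (p_t,p_x) ∈ ∂₊V(t,x), one has p_t + H(x,−p_x) ≤ 0. The key inequality is that for every u ∈ ℝⁿ, D↓V(t,x)(−1,u) ≥ −L(x,u), where D↓ denotes the upper contingent derivative. -/

import Mathlib

open MeasureTheory Set Filter
open scoped ENNReal

def Superlinear {n : ℕ} (Θ : EuclideanSpace ℝ (Fin n) → ℝ) : Prop :=
  ∀ M : ℝ, ∃ R : ℝ, ∀ u : EuclideanSpace ℝ (Fin n), R ≤ ‖u‖ → M * ‖u‖ ≤ Θ u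

/-- The value function of the Bolza problem: infimum of total cost over
absolutely continuous arcs starting at `x` (represented by their integrable
derivative `y'`). -/
noncomputable def bolzaValue {n : ℕ}
    (L : EuclideanSpace ℝ (Fin n) → EuclideanSpace ℝ (Fin n) → ℝ)
    (φ : EuclideanSpace ℝ (Fin n) → ℝ≥0∞)
    (t : ℝ) (x : EuclideanSpace ℝ (Fin n)) : ℝ≥0∞ :=
  ⨅ (y : ℝ → EuclideanSpace ℝ (Fin n)) (y' : ℝ → EuclideanSpace ℝ (Fin n))
    (_ : IntervalIntegrable y' volume 0 t)
    (_ : ∀ s ∈ Set.Icc (0:ℝ) t, y s = x + ∫ τ in (0:ℝ)..s, y' τ)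
    (_ : IntervalIntegrable (fun s => L (y s) (y' s)) volume 0 t),
    ENNReal.ofReal (∫ s in (0:ℝ)..t, L (y s) (y' s)) + φ (y t)

open scoped RealInnerProductSpace Topology

/-- The Hamiltonian `H(x,p) = sup_u (⟨p,u⟩ - L(x,u))`. -/
noncomputable def hamiltonian {n : ℕ}
    (L : EuclideanSpace ℝ (Fin n) → EuclideanSpace ℝ (Fin n) → ℝ)
    (x p : EuclideanSpace ℝ (Fin n)) : ℝ :=
  sSup {r : ℝ | ∃ u : EuclideanSpace ℝ (Fin n), r = ⟪p, u⟫ - L x u}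

/-- The superdifferential `∂₊W(t,x)` of a function `W : ℝ × ℝⁿ → EReal`. -/
def superdifferentialP {n : ℕ}
    (W : ℝ × EuclideanSpace ℝ (Fin n) → EReal) (p : ℝ × EuclideanSpace ℝ (Fin n)) :
    Set (ℝ × EuclideanSpace ℝ (Fin n)) :=
  {q | Filter.limsup (fun z : ℝ × EuclideanSpace ℝ (Fin n) =>
      ((‖z - p‖⁻¹ : ℝ) : EReal) *
        (W z - W p - ((q.1 * (z.1 - p.1) + ⟪q.2, z.2 - p.2⟫ : ℝ) : EReal)))
    (nhdsWithin p {p}ᶜ) ≤ (0 : EReal)}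

/-- Upper contingent derivative `D↓W(p)(w) = limsup_{h→0+, v→w} (W(p+hv) - W(p))/h`. -/
noncomputable def upperContingentDeriv {α : Type*} [AddCommGroup α] [Module ℝ α]
    [TopologicalSpace α] (W : α → EReal) (p : α) (w : α) : EReal :=
  Filter.limsup (fun q : ℝ × α => ((q.1⁻¹ : ℝ) : EReal) * (W (p + q.1 • q.2) - W p))
    ((𝓝[>] (0:ℝ)) ×ˢ 𝓝 w)



lemma ereal_coe_ennreal_fin {v : ℝ≥0∞} (hv : v ≠ ⊤) :
    ((v : EReal)) = ((v.toReal : ℝ) : EReal) := by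
  rw [← EReal.coe_toReal (x := (v : EReal)) (by simpa [EReal.coe_ennreal_eq_top_iff] using hv)
    (EReal.bot_lt_coe_ennreal v).ne', EReal.toReal_coe_ennreal]

lemma avg_tendsto {g : ℝ → ℝ} (hg : Continuous g) :
    Tendsto (fun h : ℝ => h⁻¹ * ∫ s in (0:ℝ)..h, g s) (𝓝[>] 0) (𝓝 (g 0)) := by
  have hder : HasDerivAt (fun h : ℝ => ∫ s in (0:ℝ)..h, g s) (g 0) 0 :=
    intervalIntegral.integral_hasDerivAt_right (hg.intervalIntegrable (μ := volume) 0 0)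
      hg.aestronglyMeasurable.stronglyMeasurableAtFilter hg.continuousAt
  rw [hasDerivAt_iff_tendsto_slope] at hder
  have := hder.mono_left (nhdsWithin_mono _ (fun h (hh : h ∈ Ioi (0:ℝ)) => hh.ne' : Ioi (0:ℝ) ⊆ {(0:ℝ)}ᶜ))
  refine this.congr fun h => ?_
  simp [slope_def_field, intervalIntegral.integral_same, div_eq_inv_mul]

variable {n : ℕ} {L : EuclideanSpace ℝ (Fin n) → EuclideanSpace ℝ (Fin n) → ℝ}
  {φ : EuclideanSpace ℝ (Fin n) → ℝ≥0∞}

lemma bolza_le {t : ℝ} {x : EuclideanSpace ℝ (Fin n)}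
    (y y' : ℝ → EuclideanSpace ℝ (Fin n))
    (h1 : IntervalIntegrable y' volume 0 t)
    (h2 : ∀ s ∈ Set.Icc (0:ℝ) t, y s = x + ∫ τ in (0:ℝ)..s, y' τ)
    (h3 : IntervalIntegrable (fun s => L (y s) (y' s)) volume 0 t) :
    bolzaValue L φ t x ≤ ENNReal.ofReal (∫ s in (0:ℝ)..t, L (y s) (y' s)) + φ (y t) := by
  refine iInf_le_of_le y (iInf_le_of_le y' ?_)
  exact iInf_le_of_le h1 (iInf_le_of_le h2 (iInf_le _ h3))

lemma bolza_ne_top (hLcont : Continuous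
      (fun p : EuclideanSpace ℝ (Fin n) × EuclideanSpace ℝ (Fin n) => L p.1 p.2))
    (hφ : ∃ x, φ x ≠ ⊤) {t : ℝ} (ht : 0 < t) (x : EuclideanSpace ℝ (Fin n)) :
    bolzaValue L φ t x ≠ ⊤ := by
  obtain ⟨x₀, hx₀⟩ := hφ
  set c : EuclideanSpace ℝ (Fin n) := t⁻¹ • (x₀ - x) with hc
  set y : ℝ → EuclideanSpace ℝ (Fin n) := fun s => x + s • c with hy
  have h2 : ∀ s ∈ Set.Icc (0:ℝ) t, y s = x + ∫ τ in (0:ℝ)..s, (fun _ => c) τ := by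
    intro s _
    simp only [y, intervalIntegral.integral_const, sub_zero, hc]
  have h3 : IntervalIntegrable (fun s => L (y s) c) volume 0 t := by
    exact (hLcont.comp ((by continuity : Continuous y).prodMk continuous_const)).intervalIntegrable 0 t
  have hyt : y t = x₀ := by
    simp only [hy, hc, smul_smul, mul_inv_cancel₀ ht.ne', one_smul]
    abel
  have := bolza_le (φ := φ) y (fun _ => c) intervalIntegrable_const h2 h3
  rw [hyt] at this
  exact ne_top_of_le_ne_top (by simp [hx₀, lt_top_iff_ne_top.mp (ENNReal.ofReal_lt_top)]) this

lemma bolza_dpp (hL0 : ∀ x u, 0 ≤ L x u)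
    (hLcont : Continuous
      (fun p : EuclideanSpace ℝ (Fin n) × EuclideanSpace ℝ (Fin n) => L p.1 p.2))
    {t h : ℝ} (h0 : 0 < h) (hht : h ≤ t) (x u : EuclideanSpace ℝ (Fin n)) :
    bolzaValue L φ t x ≤
      ENNReal.ofReal (∫ s in (0:ℝ)..h, L (x + s • u) u) +
        bolzaValue L φ (t - h) (x + h • u) := by
  show _ ≤ _ + ⨅ (y : ℝ → EuclideanSpace ℝ (Fin n)) (y' : ℝ → EuclideanSpace ℝ (Fin n))
    (_ : IntervalIntegrable y' volume 0 (t - h))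
    (_ : ∀ s ∈ Set.Icc (0:ℝ) (t - h), y s = (x + h • u) + ∫ τ in (0:ℝ)..s, y' τ)
    (_ : IntervalIntegrable (fun s => L (y s) (y' s)) volume 0 (t - h)),
    ENNReal.ofReal (∫ s in (0:ℝ)..(t - h), L (y s) (y' s)) + φ (y (t - h))
  simp only [ENNReal.add_iInf]
  refine le_iInf fun y => le_iInf fun y' => le_iInf fun hy' => le_iInf fun hyx =>
    le_iInf fun hyL => ?_
  set z : ℝ → EuclideanSpace ℝ (Fin n) := fun s => if s ≤ h then x + s • u else y (s - h)
    with hzdef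
  set z' : ℝ → EuclideanSpace ℝ (Fin n) := fun s => if s ≤ h then u else y' (s - h)
    with hz'def
  have hz'1 : IntervalIntegrable z' volume 0 h := by
    rw [intervalIntegrable_iff, uIoc_of_le h0.le]
    refine ((integrableOn_const (C := u) measure_Ioc_lt_top.ne)).congr_fun
      (fun s hs => ?_) measurableSet_Ioc
    simp [z', hs.2]
  have hz'2 : IntervalIntegrable z' volume h t := by
    have H := hy'.comp_sub_right h
    rw [zero_add, sub_add_cancel] at H
    rw [intervalIntegrable_iff, uIoc_of_le hht]
    rw [intervalIntegrable_iff, uIoc_of_le hht] at H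
    exact H.congr_fun (fun s hs => by simp [z', not_le.2 hs.1]) measurableSet_Ioc
  have hz'12 : IntervalIntegrable z' volume 0 t := hz'1.trans hz'2
  have hint0h : ∀ s : ℝ, 0 ≤ s → s ≤ h → (∫ τ in (0:ℝ)..s, z' τ) = s • u := by
    intro s hs0 hsh
    rw [intervalIntegral.integral_congr (g := fun _ => u)
        (fun τ hτ => by rw [uIcc_of_le hs0] at hτ; simp [z', hτ.2.trans hsh]),
      intervalIntegral.integral_const, sub_zero]
  have hinths : ∀ s : ℝ, h < s → (∫ τ in h..s, z' τ) = ∫ τ in (0:ℝ)..(s - h), y' τ := by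
    intro s hhs
    rw [intervalIntegral.integral_congr_ae (g := fun τ => y' (τ - h)) ?_,
      intervalIntegral.integral_comp_sub_right _ h, sub_self]
    filter_upwards with τ hτ
    rw [uIoc_of_le hhs.le] at hτ
    simp [z', not_le.2 hτ.1]
  have h2z : ∀ s ∈ Set.Icc (0:ℝ) t, z s = x + ∫ τ in (0:ℝ)..s, z' τ := by
    intro s hs
    by_cases hsh : s ≤ h
    · rw [hint0h s hs.1 hsh]; simp [z, hsh]
    · push_neg at hsh
      have hsub : IntervalIntegrable z' volume h s := by
        refine hz'2.mono_set ?_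
        rw [uIcc_of_le hsh.le, uIcc_of_le hht]
        exact Set.Icc_subset_Icc le_rfl hs.2
      rw [← intervalIntegral.integral_add_adjacent_intervals hz'1 hsub,
        hint0h h h0.le le_rfl, hinths s hsh]
      simp only [hzdef, if_neg (not_le.2 hsh)]
      rw [hyx (s - h) ⟨by linarith, by linarith [hs.2]⟩]
      abel
  have hLz1 : IntervalIntegrable (fun s => L (z s) (z' s)) volume 0 h := by
    have hcont : Continuous (fun s : ℝ => L (x + s • u) u) :=
      hLcont.comp ((by continuity : Continuous fun s : ℝ => x + s • u).prodMk
        continuous_const)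
    have H := hcont.intervalIntegrable (μ := volume) 0 h
    rw [intervalIntegrable_iff, uIoc_of_le h0.le] at H ⊢
    exact H.congr_fun (fun s hs => by simp [z, z', hs.2]) measurableSet_Ioc
  have hLz2 : IntervalIntegrable (fun s => L (z s) (z' s)) volume h t := by
    have H := hyL.comp_sub_right h
    rw [zero_add, sub_add_cancel] at H
    rw [intervalIntegrable_iff, uIoc_of_le hht] at H ⊢
    exact H.congr_fun (fun s hs => by simp [z, z', not_le.2 hs.1]) measurableSet_Ioc
  have e1 : (∫ s in (0:ℝ)..h, L (z s) (z' s)) = ∫ s in (0:ℝ)..h, L (x + s • u) u :=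
    intervalIntegral.integral_congr
      (fun s hs => by rw [uIcc_of_le h0.le] at hs; simp [z, z', hs.2])
  have e2 : (∫ s in h..t, L (z s) (z' s)) = ∫ s in (0:ℝ)..(t - h), L (y s) (y' s) := by
    rw [intervalIntegral.integral_congr_ae (g := fun s => L (y (s - h)) (y' (s - h))) ?_,
      intervalIntegral.integral_comp_sub_right (fun s => L (y s) (y' s)) h, sub_self]
    filter_upwards with s hs
    rw [uIoc_of_le hht] at hs
    simp [z, z', not_le.2 hs.1]
  have esplit : (∫ s in (0:ℝ)..t, L (z s) (z' s)) =
      (∫ s in (0:ℝ)..h, L (x + s • u) u) + ∫ s in (0:ℝ)..(t - h), L (y s) (y' s) := by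
    rw [← e1, ← e2]
    exact (intervalIntegral.integral_add_adjacent_intervals hLz1 hLz2).symm
  have hzt : z t = y (t - h) := by
    rcases lt_or_eq_of_le hht with hlt | heq
    · simp [z, not_le.2 hlt]
    · have hth : t - h = 0 := by rw [← heq]; ring
      have hy0 : y (t - h) = x + h • u := by
        rw [hth, hyx 0 ⟨le_rfl, by rw [hth]⟩, intervalIntegral.integral_same, add_zero]
      rw [hy0]
      simp [hzdef, heq]
  calc bolzaValue L φ t x
      ≤ ENNReal.ofReal (∫ s in (0:ℝ)..t, L (z s) (z' s)) + φ (z t) :=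
        bolza_le z z' hz'12 h2z (hLz1.trans hLz2)
    _ = ENNReal.ofReal (∫ s in (0:ℝ)..h, L (x + s • u) u) +
        (ENNReal.ofReal (∫ s in (0:ℝ)..(t - h), L (y s) (y' s)) + φ (y (t - h))) := by
        rw [hzt, esplit, ENNReal.ofReal_add
          (intervalIntegral.integral_nonneg h0.le fun s _ => hL0 _ _)
          (intervalIntegral.integral_nonneg (by linarith) fun s _ => hL0 _ _), add_assoc]

lemma part1 (hL0 : ∀ x u, 0 ≤ L x u)
    (hLcont : Continuous
      (fun p : EuclideanSpace ℝ (Fin n) × EuclideanSpace ℝ (Fin n) => L p.1 p.2))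
    (hφ : ∃ x, φ x ≠ ⊤) {t : ℝ} (ht : 0 < t) (x u : EuclideanSpace ℝ (Fin n)) :
    ((-(L x u) : ℝ) : EReal) ≤ upperContingentDeriv
      (fun q : ℝ × EuclideanSpace ℝ (Fin n) =>
        ((bolzaValue L φ q.1 q.2 : ℝ≥0∞) : EReal)) (t, x) (-1, u) := by
  set W : ℝ × EuclideanSpace ℝ (Fin n) → EReal :=
    fun q => ((bolzaValue L φ q.1 q.2 : ℝ≥0∞) : EReal) with hW
  set f : ℝ × (ℝ × EuclideanSpace ℝ (Fin n)) → EReal :=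
    fun q => ((q.1⁻¹ : ℝ) : EReal) * (W ((t,x) + q.1 • q.2) - W (t,x)) with hf
  set m : ℝ → ℝ × (ℝ × EuclideanSpace ℝ (Fin n)) := fun h => (h, ((-1:ℝ), u)) with hm
  have hmap : Filter.map m (𝓝[>](0:ℝ)) ≤ (𝓝[>](0:ℝ)) ×ˢ 𝓝 ((-1:ℝ), u) :=
    Filter.Tendsto.prodMk tendsto_id tendsto_const_nhds
  have hA : Tendsto (fun h : ℝ => ((-(h⁻¹ * ∫ s in (0:ℝ)..h, L (x + s • u) u) : ℝ) : EReal))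
      (𝓝[>] 0) (𝓝 ((-(L x u) : ℝ) : EReal)) := by
    rw [EReal.tendsto_coe]
    have hg : Continuous (fun s : ℝ => L (x + s • u) u) :=
      hLcont.comp ((by continuity : Continuous fun s : ℝ => x + s • u).prodMk continuous_const)
    have := (avg_tendsto hg).neg
    simpa using this
  have hev : ∀ᶠ h in 𝓝[>](0:ℝ),
      ((-(h⁻¹ * ∫ s in (0:ℝ)..h, L (x + s • u) u) : ℝ) : EReal) ≤ (f ∘ m) h := by
    filter_upwards [Ioo_mem_nhdsGT_of_mem (⟨le_rfl, ht⟩ : (0:ℝ) ∈ Ico 0 t)] with h hh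
    have h0 : 0 < h := hh.1
    have hlt : h < t := hh.2
    have hpt : ((t,x) : ℝ × EuclideanSpace ℝ (Fin n)) + h • ((-1:ℝ), u) = (t - h, x + h • u) := by
      simp only [Prod.smul_mk, Prod.mk_add_mk, Prod.mk.injEq, smul_eq_mul]
      constructor
      · ring
      · trivial
    have ha := bolza_ne_top (φ := φ) hLcont hφ ht x
    have hb := bolza_ne_top (φ := φ) hLcont hφ (by linarith : 0 < t - h) (x + h • u)
    have hreal : (bolzaValue L φ t x).toReal ≤ (∫ s in (0:ℝ)..h, L (x + s • u) u)
        + (bolzaValue L φ (t - h) (x + h • u)).toReal := by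
      have hdpp := bolza_dpp (φ := φ) hL0 hLcont h0 hlt.le x u
      have htop : ENNReal.ofReal (∫ s in (0:ℝ)..h, L (x + s • u) u)
          + bolzaValue L φ (t - h) (x + h • u) ≠ ⊤ :=
        ENNReal.add_ne_top.2 ⟨ENNReal.ofReal_ne_top, hb⟩
      have := ENNReal.toReal_mono htop hdpp
      rwa [ENNReal.toReal_add ENNReal.ofReal_ne_top hb, ENNReal.toReal_ofReal
        (intervalIntegral.integral_nonneg h0.le fun s _ => hL0 _ _)] at this
    have hfm : (f ∘ m) h = ((h⁻¹ * ((bolzaValue L φ (t - h) (x + h • u)).toReal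
        - (bolzaValue L φ t x).toReal) : ℝ) : EReal) := by
      show f (m h) = _
      rw [hf, hm]
      simp only [hpt]
      rw [hW]
      simp only []
      rw [ereal_coe_ennreal_fin hb, ereal_coe_ennreal_fin ha, ← EReal.coe_sub, ← EReal.coe_mul]
    rw [hfm, EReal.coe_le_coe_iff]
    have h1 : -(∫ s in (0:ℝ)..h, L (x + s • u) u)
        ≤ (bolzaValue L φ (t - h) (x + h • u)).toReal - (bolzaValue L φ t x).toReal := by
      linarith
    calc -(h⁻¹ * ∫ s in (0:ℝ)..h, L (x + s • u) u)
        = h⁻¹ * (-(∫ s in (0:ℝ)..h, L (x + s • u) u)) := by ring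
      _ ≤ _ := mul_le_mul_of_nonneg_left h1 (inv_nonneg.2 h0.le)
  calc ((-(L x u) : ℝ) : EReal)
      = liminf (fun h : ℝ => ((-(h⁻¹ * ∫ s in (0:ℝ)..h, L (x + s • u) u) : ℝ) : EReal)) (𝓝[>] 0) :=
        (hA.liminf_eq).symm
    _ ≤ liminf (f ∘ m) (𝓝[>] 0) := liminf_le_liminf hev
    _ ≤ limsup (f ∘ m) (𝓝[>] 0) := liminf_le_limsup
    _ = limsup f (map m (𝓝[>] 0)) := limsup_comp f m _
    _ ≤ limsup f ((𝓝[>](0:ℝ)) ×ˢ 𝓝 ((-1:ℝ), u)) := limsup_le_limsup_of_le hmap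
    _ = upperContingentDeriv W (t,x) (-1, u) := rfl

lemma part2key (hL0 : ∀ x u, 0 ≤ L x u)
    (hLcont : Continuous
      (fun p : EuclideanSpace ℝ (Fin n) × EuclideanSpace ℝ (Fin n) => L p.1 p.2))
    (hφ : ∃ x, φ x ≠ ⊤) {t : ℝ} (ht : 0 < t) (x : EuclideanSpace ℝ (Fin n))
    (pt : ℝ) (px : EuclideanSpace ℝ (Fin n))
    (hq : (pt, px) ∈ superdifferentialP
      (fun q : ℝ × EuclideanSpace ℝ (Fin n) =>
        ((bolzaValue L φ q.1 q.2 : ℝ≥0∞) : EReal)) (t, x))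
    (u : EuclideanSpace ℝ (Fin n)) :
    pt - ⟪px, u⟫ - L x u ≤ 0 := by
  set W : ℝ × EuclideanSpace ℝ (Fin n) → EReal :=
    fun q => ((bolzaValue L φ q.1 q.2 : ℝ≥0∞) : EReal) with hW
  set F : ℝ × EuclideanSpace ℝ (Fin n) → EReal := fun z =>
      ((‖z - ((t,x) : ℝ × EuclideanSpace ℝ (Fin n))‖⁻¹ : ℝ) : EReal) *
        (W z - W (t,x) - ((pt * (z.1 - t) + ⟪px, z.2 - x⟫ : ℝ) : EReal)) with hF
  have hqF : limsup F (𝓝[{((t,x) : ℝ × EuclideanSpace ℝ (Fin n))}ᶜ] (t,x)) ≤ (0 : EReal) := hq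
  set m2 : ℝ → ℝ × EuclideanSpace ℝ (Fin n) := fun h => (t - h, x + h • u) with hm2
  set c : ℝ := ‖((-1:ℝ), u)‖ with hc
  have hcpos : 0 < c := by
    rw [hc, norm_pos_iff]
    intro hcontra
    simpa using congrArg Prod.fst hcontra
  have hsub : ∀ h : ℝ, m2 h - ((t,x) : ℝ × EuclideanSpace ℝ (Fin n)) = h • ((-1:ℝ), u) := by
    intro h
    simp only [hm2, Prod.mk_sub_mk, Prod.smul_mk, Prod.mk.injEq, smul_eq_mul]
    constructor
    · ring
    · abel
  have hnorm : ∀ h : ℝ, 0 < h → ‖m2 h - ((t,x) : ℝ × EuclideanSpace ℝ (Fin n))‖ = h * c := by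
    intro h h0
    rw [hsub h, norm_smul, Real.norm_eq_abs, abs_of_pos h0, hc]
  have hm2filt : Tendsto m2 (𝓝[>](0:ℝ)) (𝓝[{((t,x) : ℝ × EuclideanSpace ℝ (Fin n))}ᶜ] (t,x)) := by
    rw [tendsto_nhdsWithin_iff]
    constructor
    · have h1 : Tendsto (fun h : ℝ => t - h) (𝓝 0) (𝓝 t) := by
        have := ((continuous_const.sub continuous_id) : Continuous fun h : ℝ => t - h).tendsto (0:ℝ)
        simpa [Pi.sub_def] using this
      have h2 : Tendsto (fun h : ℝ => x + h • u) (𝓝 (0:ℝ)) (𝓝 x) := by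
        have := ((by continuity : Continuous fun h : ℝ => x + h • u)).tendsto (0:ℝ)
        simpa using this
      exact ((h1.prodMk_nhds h2).mono_left nhdsWithin_le_nhds)
    · filter_upwards [self_mem_nhdsWithin] with h hh
      have h0 : (0:ℝ) < h := hh
      simp only [Set.mem_compl_iff, Set.mem_singleton_iff]
      intro hcontra
      have h1 : t - h = t := congrArg Prod.fst hcontra
      linarith
  set G : ℝ → EReal := fun h =>
    ((c⁻¹ * ((pt - ⟪px, u⟫) - h⁻¹ * ∫ s in (0:ℝ)..h, L (x + s • u) u) : ℝ) : EReal) with hG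
  have hGtend : Tendsto G (𝓝[>] 0) (𝓝 ((c⁻¹ * ((pt - ⟪px, u⟫) - L x u) : ℝ) : EReal)) := by
    rw [hG, EReal.tendsto_coe]
    have hg : Continuous (fun s : ℝ => L (x + s • u) u) :=
      hLcont.comp ((by continuity : Continuous fun s : ℝ => x + s • u).prodMk continuous_const)
    have h1 := (tendsto_const_nhds (x := pt - ⟪px, u⟫) (f := 𝓝[>] (0:ℝ))).sub (avg_tendsto hg)
    have h2 := h1.const_mul c⁻¹
    simpa using h2
  have hev : ∀ᶠ h in 𝓝[>](0:ℝ), G h ≤ (F ∘ m2) h := by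
    filter_upwards [Ioo_mem_nhdsGT_of_mem (⟨le_rfl, ht⟩ : (0:ℝ) ∈ Ico 0 t)] with h hh
    have h0 : 0 < h := hh.1
    have hlt : h < t := hh.2
    have ha := bolza_ne_top (φ := φ) hLcont hφ ht x
    have hb := bolza_ne_top (φ := φ) hLcont hφ (by linarith : 0 < t - h) (x + h • u)
    set A : ℝ := (bolzaValue L φ t x).toReal with hA
    set B : ℝ := (bolzaValue L φ (t - h) (x + h • u)).toReal with hB
    have hreal : A ≤ (∫ s in (0:ℝ)..h, L (x + s • u) u) + B := by
      have hdpp := bolza_dpp (φ := φ) hL0 hLcont h0 hlt.le x u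
      have htop : ENNReal.ofReal (∫ s in (0:ℝ)..h, L (x + s • u) u)
          + bolzaValue L φ (t - h) (x + h • u) ≠ ⊤ :=
        ENNReal.add_ne_top.2 ⟨ENNReal.ofReal_ne_top, hb⟩
      have := ENNReal.toReal_mono htop hdpp
      rwa [ENNReal.toReal_add ENNReal.ofReal_ne_top hb, ENNReal.toReal_ofReal
        (intervalIntegral.integral_nonneg h0.le fun s _ => hL0 _ _)] at this
    have hrh : pt * ((t - h) - t) + ⟪px, (x + h • u) - x⟫ = -(h * pt) + h * ⟪px, u⟫ := by
      have : (x + h • u) - x = h • u := by abel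
      rw [this, real_inner_smul_right]
      ring
    have hFm : (F ∘ m2) h = (((h * c)⁻¹ * (B - A - (-(h * pt) + h * ⟪px, u⟫)) : ℝ) : EReal) := by
      show F (m2 h) = _
      rw [hF]
      simp only [hm2]
      rw [hnorm h h0]
      rw [hW]
      simp only []
      rw [ereal_coe_ennreal_fin hb, ereal_coe_ennreal_fin ha, hrh, ← hA, ← hB,
        ← EReal.coe_sub, ← EReal.coe_sub, ← EReal.coe_mul]
    rw [hFm, hG, EReal.coe_le_coe_iff]
    have key1 : -(∫ s in (0:ℝ)..h, L (x + s • u) u) ≤ B - A := by linarith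
    have heq : c⁻¹ * ((pt - ⟪px, u⟫) - h⁻¹ * ∫ s in (0:ℝ)..h, L (x + s • u) u)
        = (h * c)⁻¹ * ((-(∫ s in (0:ℝ)..h, L (x + s • u) u)) - (-(h * pt) + h * ⟪px, u⟫)) := by
      field_simp
      ring
    rw [heq]
    apply mul_le_mul_of_nonneg_left _ (inv_nonneg.2 (mul_nonneg h0.le hcpos.le))
    linarith
  have hchain : ((c⁻¹ * ((pt - ⟪px, u⟫) - L x u) : ℝ) : EReal) ≤ (0 : EReal) := by
    calc ((c⁻¹ * ((pt - ⟪px, u⟫) - L x u) : ℝ) : EReal)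
        = liminf G (𝓝[>] 0) := (hGtend.liminf_eq).symm
      _ ≤ liminf (F ∘ m2) (𝓝[>] 0) := liminf_le_liminf hev
      _ ≤ limsup (F ∘ m2) (𝓝[>] 0) := liminf_le_limsup
      _ = limsup F (map m2 (𝓝[>] 0)) := limsup_comp F m2 _
      _ ≤ limsup F (𝓝[{((t,x) : ℝ × EuclideanSpace ℝ (Fin n))}ᶜ] (t,x)) :=
          limsup_le_limsup_of_le hm2filt
      _ ≤ 0 := hqF
  rw [show ((0:EReal)) = ((0:ℝ) : EReal) by norm_cast, EReal.coe_le_coe_iff] at hchain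
  by_contra hcon
  push_neg at hcon
  have := mul_pos (inv_pos.2 hcpos) hcon
  linarith

theorem stmt_19 {n : ℕ}
    (L : EuclideanSpace ℝ (Fin n) → EuclideanSpace ℝ (Fin n) → ℝ)
    (hL0 : ∀ x u, 0 ≤ L x u)
    (hLcont : Continuous
      (fun p : EuclideanSpace ℝ (Fin n) × EuclideanSpace ℝ (Fin n) => L p.1 p.2))
    (hLconv : ∀ x, ConvexOn ℝ Set.univ (L x))
    (Θ : EuclideanSpace ℝ (Fin n) → ℝ) (hΘ0 : ∀ u, 0 ≤ Θ u)
    (hΘconv : ConvexOn ℝ Set.univ Θ) (hΘsuper : Superlinear Θ)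
    (hcoerc : ∀ x u, Θ u ≤ L x u)
    (φ : EuclideanSpace ℝ (Fin n) → ℝ≥0∞)
    (hφlsc : LowerSemicontinuous φ) (hφ : ∃ x, φ x ≠ ⊤) :
    ∀ (t : ℝ) (x : EuclideanSpace ℝ (Fin n)), 0 < t →
      (∀ u : EuclideanSpace ℝ (Fin n),
        ((-(L x u) : ℝ) : EReal) ≤ upperContingentDeriv
          (fun q : ℝ × EuclideanSpace ℝ (Fin n) =>
            ((bolzaValue L φ q.1 q.2 : ℝ≥0∞) : EReal)) (t, x) (-1, u)) ∧
      ∀ pt : ℝ, ∀ px : EuclideanSpace ℝ (Fin n),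
        (pt, px) ∈ superdifferentialP
          (fun q : ℝ × EuclideanSpace ℝ (Fin n) =>
            ((bolzaValue L φ q.1 q.2 : ℝ≥0∞) : EReal)) (t, x) →
        pt + hamiltonian L x (-px) ≤ 0 := by
  intro t x ht
  refine ⟨fun u => part1 hL0 hLcont hφ ht x u, fun pt px hq => ?_⟩
  have key := fun u => part2key hL0 hLcont hφ ht x pt px hq u
  have hne : {r : ℝ | ∃ u : EuclideanSpace ℝ (Fin n), r = ⟪-px, u⟫ - L x u}.Nonempty :=
    ⟨⟪-px, 0⟫ - L x 0, 0, rfl⟩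
  have hle : ∀ r ∈ {r : ℝ | ∃ u : EuclideanSpace ℝ (Fin n), r = ⟪-px, u⟫ - L x u}, r ≤ -pt := by
    rintro r ⟨u, rfl⟩
    have := key u
    rw [inner_neg_left]
    linarith
  have hH : hamiltonian L x (-px) ≤ -pt := csSup_le hne hle
  linarith
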